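/- arXiv:1212.4129 — 2 statements merged into one kernel-verified Lean document; each statement's English description precedes it below -/
import Mathlib

section
/- For any undirected graphs G and H: dim((G·H) ×_e K⃗_2) ≤ dim(G ×_e K⃗_2) + χ(G)·dim(H ×_e K⃗_2), where · is the lexicographic product. -/
open SimpleGraph

def tensor {α β : Type*} (G : SimpleGraph α) (H : SimpleGraph β) :
    SimpleGraph (α × β) where
  Adj p q := G.Adj p.1 q.1 ∧ H.Adj p.2 q.2
  symm := ⟨fun p q h => ⟨h.1.symm, h.2.symm⟩⟩
  loopless := ⟨fun p h => G.loopless.irrefl p.1 h.1⟩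

def etensor {α β : Type*} (G : SimpleGraph α) (H : SimpleGraph β) :
    SimpleGraph (α × β) where
  Adj p q := (G.Adj p.1 q.1 ∨ p.1 = q.1) ∧ H.Adj p.2 q.2
  symm := ⟨fun p q h => ⟨h.1.imp (fun h' => h'.symm) (fun h' => h'.symm), h.2.symm⟩⟩
  loopless := ⟨fun p h => H.loopless.irrefl p.2 h.2⟩

def disj {α β : Type*} (G : SimpleGraph α) (H : SimpleGraph β) :
    SimpleGraph (α × β) where
  Adj p q := G.Adj p.1 q.1 ∨ H.Adj p.2 q.2
  symm := ⟨fun p q h => h.imp (fun h' => h'.symm) (fun h' => h'.symm)⟩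
  loopless := ⟨fun p h => h.elim (G.loopless.irrefl p.1) (H.loopless.irrefl p.2)⟩

def lexProd {α β : Type*} (G : SimpleGraph α) (H : SimpleGraph β) :
    SimpleGraph (α × β) where
  Adj p q := G.Adj p.1 q.1 ∨ (p.1 = q.1 ∧ H.Adj p.2 q.2)
  symm := ⟨fun p q h => h.imp (fun h' => h'.symm) (fun h' => ⟨h'.1.symm, h'.2.symm⟩)⟩
  loopless := ⟨fun p h => h.elim (G.loopless.irrefl p.1) (fun h' => H.loopless.irrefl p.2 h'.2)⟩

def disjPow {α : Type*} (G : SimpleGraph α) (k : ℕ) : SimpleGraph (Fin k → α) where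
  Adj x y := ∃ i, G.Adj (x i) (y i)
  symm := ⟨fun x y h => h.imp (fun i hi => hi.symm)⟩
  loopless := ⟨fun x h => h.elim (fun i hi => G.loopless.irrefl (x i) hi)⟩

def lexPow {α : Type*} (G : SimpleGraph α) (k : ℕ) : SimpleGraph (Fin k → α) where
  Adj x y := ∃ i, G.Adj (x i) (y i) ∧ ∀ j, j < i → x j = y j
  symm := ⟨fun x y h => h.imp (fun i hi => ⟨hi.1.symm, fun j hj => (hi.2 j hj).symm⟩)⟩
  loopless := ⟨fun x h => h.elim (fun i hi => G.loopless.irrefl (x i) hi.1)⟩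

def IsIndMatching {V : Type*} (G : SimpleGraph V) {n : ℕ} (a b : Fin n → V) : Prop :=
  (∀ i, G.Adj (a i) (b i)) ∧
  ∀ i j, i ≠ j → ¬ G.Adj (a i) (a j) ∧ ¬ G.Adj (a i) (b j) ∧ ¬ G.Adj (b i) (b j)

noncomputable def imNum {V : Type*} (G : SimpleGraph V) : ℕ :=
  sSup {n | ∃ a b : Fin n → V, IsIndMatching G a b}

def SemiCond {V : Type*} (G : SimpleGraph V) (σ : V → ℕ) (u u' v v' : V) : Prop :=
  σ u < σ u' → σ u < σ v → σ v < σ v' → ¬ G.Adj u v ∧ ¬ G.Adj u v'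

def IsSemiIndMatching {V : Type*} (G : SimpleGraph V) (σ : V → ℕ) {n : ℕ}
    (a b : Fin n → V) : Prop :=
  (∀ i, G.Adj (a i) (b i)) ∧
  (∀ i j, i ≠ j → a i ≠ a j ∧ a i ≠ b j ∧ b i ≠ b j) ∧
  (∀ i j, i ≠ j →
    SemiCond G σ (a i) (b i) (a j) (b j) ∧ SemiCond G σ (a i) (b i) (b j) (a j) ∧
    SemiCond G σ (b i) (a i) (a j) (b j) ∧ SemiCond G σ (b i) (a i) (b j) (a j))

noncomputable def simNumOrd {V : Type*} (G : SimpleGraph V) (σ : V → ℕ) : ℕ :=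
  sSup {n | ∃ a b : Fin n → V, IsSemiIndMatching G σ a b}

noncomputable def simNum {V : Type*} (G : SimpleGraph V) : ℕ :=
  sSup {n | ∃ σ : V → ℕ, Function.Injective σ ∧
    ∃ a b : Fin n → V, IsSemiIndMatching G σ a b}

noncomputable def indepNum {V : Type*} (G : SimpleGraph V) : ℕ :=
  sSup {n | ∃ s : Finset V, s.card = n ∧ ∀ u ∈ s, ∀ v ∈ s, ¬ G.Adj u v}

noncomputable def chromNum {V : Type*} (G : SimpleGraph V) : ℕ :=
  sInf {n | G.Colorable n}

def vecLT {d : ℕ} (x y : Fin d → ℝ) : Prop := (∀ i, x i ≤ y i) ∧ ∃ i, x i < y i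

def Realizes {V : Type*} (R : V → V → Prop) {d : ℕ} (φ : V → Fin d → ℝ) : Prop :=
  ∀ u v, u ≠ v → (R u v ↔ vecLT (φ u) (φ v))

noncomputable def posetDim {V : Type*} (R : V → V → Prop) : ℕ :=
  sInf {d | ∃ φ : V → Fin d → ℝ, Realizes R φ}

def IsHeightTwoPoset {V : Type*} (R : V → V → Prop) : Prop :=
  (∀ u, ¬ Relation.TransGen R u u) ∧
  (∀ u v w, R u v → R v w → R u w) ∧
  (∀ u, (∀ v, ¬ R v u) ∨ (∀ v, ¬ R u v))

def etensorRel {α β : Type*} (G : SimpleGraph α) (R : β → β → Prop) :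
    α × β → α × β → Prop :=
  fun p q => (G.Adj p.1 q.1 ∨ p.1 = q.1) ∧ R p.2 q.2

def tensorRel {α β : Type*} (G : SimpleGraph α) (R : β → β → Prop) :
    α × β → α × β → Prop :=
  fun p q => G.Adj p.1 q.1 ∧ R p.2 q.2

def K2dir : Fin 2 → Fin 2 → Prop := fun i j => i = 0 ∧ j = 1

def vecLT' {I : Type*} (x y : I → ℝ) : Prop := (∀ i, x i ≤ y i) ∧ ∃ i, x i < y i

theorem realizes_of_equiv {V I : Type*} {d : ℕ} (e : I ≃ Fin d) (R : V → V → Prop)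
    (φ : V → I → ℝ) (h : ∀ u v, u ≠ v → (R u v ↔ vecLT' (φ u) (φ v))) :
    Realizes R (fun v j => φ v (e.symm j)) := by
  intro u v huv
  rw [h u v huv]
  constructor
  · rintro ⟨hle, i, hi⟩
    exact ⟨fun j => hle _, ⟨e i, by simpa using hi⟩⟩
  · rintro ⟨hle, j, hj⟩
    exact ⟨fun i => by simpa using hle (e i), ⟨e.symm j, hj⟩⟩

theorem exists_realizer_etensor {γ : Type*} [Fintype γ] (A : SimpleGraph γ) :
    ∃ φ : γ × Fin 2 → Fin (posetDim (etensorRel A K2dir)) → ℝ,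
      Realizes (etensorRel A K2dir) φ := by
  classical
  set R := etensorRel A K2dir with hR
  have key : ∀ w x y : γ × Fin 2, R w x → R x y → False := by
    rintro w x y ⟨_, _, h1⟩ ⟨_, h0, _⟩
    rw [h1] at h0
    exact absurd h0 (by decide)
  set ψ : γ × Fin 2 → (γ × Fin 2) → ℝ :=
    fun x w => if w = x ∨ R w x then 1 else 0 with hψ
  have hreal : ∀ x y, x ≠ y → (R x y ↔ vecLT' (ψ x) (ψ y)) := by
    intro x y hxy
    constructor
    · intro h
      constructor
      · intro w
        by_cases hw : w = x ∨ R w x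
        · rcases hw with rfl | hw
          · simp [hψ, h]
          · exact absurd h (fun h' => key w x y hw h')
        · simp only [hψ, if_neg hw]
          split <;> norm_num
      · refine ⟨y, ?_⟩
        have h1 : ¬ (y = x ∨ R y x) := by
          rintro (rfl | hyx)
          · exact hxy rfl
          · exact key y x y hyx h
        simp [hψ, h1]
    · rintro ⟨hle, _⟩
      have h1 := hle x
      simp only [hψ, if_pos (Or.inl rfl)] at h1
      by_cases h2 : x = y ∨ R x y
      · exact h2.resolve_left hxy
      · simp only [if_neg h2] at h1; norm_num at h1
  have hne : {d | ∃ φ : γ × Fin 2 → Fin d → ℝ, Realizes R φ}.Nonempty :=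
    ⟨Fintype.card (γ × Fin 2), _, realizes_of_equiv (Fintype.equivFin (γ × Fin 2)) R ψ hreal⟩
  exact Nat.sInf_mem hne

theorem stmt14 {α β : Type*} [Fintype α] [Fintype β] (G : SimpleGraph α) (H : SimpleGraph β) :
    posetDim (etensorRel (lexProd G H) K2dir) ≤
      posetDim (etensorRel G K2dir) + chromNum G * posetDim (etensorRel H K2dir) := by
  classical
  by_cases hne : Nonempty (α × β)
  case neg =>
    have h0 : (0 : ℕ) ∈ {d | ∃ φ : (α × β) × Fin 2 → Fin d → ℝ,
        Realizes (etensorRel (lexProd G H) K2dir) φ} :=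
      ⟨fun _ _ => 0, fun u v _ => absurd ⟨u.1⟩ hne⟩
    exact le_trans (Nat.sInf_le h0) (Nat.zero_le _)
  case pos =>
  obtain ⟨u0, b0⟩ := hne
  set dG := posetDim (etensorRel G K2dir) with hdG
  set dH := posetDim (etensorRel H K2dir) with hdH
  set k := chromNum G with hk
  obtain ⟨φG, hG⟩ := exists_realizer_etensor G
  obtain ⟨φH, hH⟩ := exists_realizer_etensor H
  -- basic facts about φG
  have hGuu : ∀ u : α, vecLT (φG (u, 0)) (φG (u, 1)) := fun u =>
    (hG (u, 0) (u, 1) (fun h => (by decide : ¬ (0 : Fin 2) = 1) (congrArg Prod.snd h))).mp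
      ⟨Or.inr rfl, rfl, rfl⟩
  have hGadj : ∀ {u v : α}, G.Adj u v → vecLT (φG (u, 0)) (φG (v, 1)) := fun {u v} h =>
    (hG (u, 0) (v, 1) (fun he => (G.ne_of_adj h) (congrArg Prod.fst he))).mp
      ⟨Or.inl h, rfl, rfl⟩
  have nvG : ∀ x y : α × Fin 2, ¬ (x.2 = 0 ∧ y.2 = 1) → ¬ vecLT (φG x) (φG y) := by
    intro x y hst hv
    by_cases hxy : x = y
    · subst hxy
      obtain ⟨_, i, hi⟩ := hv
      exact absurd hi (lt_irrefl _)
    · exact hst ((hG x y hxy).mpr hv).2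
  have BG : ∀ u v : α, u ≠ v → ¬ G.Adj u v → ¬ ∀ i, φG (u, 0) i ≤ φG (v, 1) i := by
    intro u v huv hadj hle
    have hnv : ¬ vecLT (φG (u, 0)) (φG (v, 1)) := fun hv => by
      rcases ((hG _ _ (fun he => huv (congrArg Prod.fst he))).mpr hv).1 with h | h
      · exact hadj h
      · exact huv h
    have heq : ∀ i, φG (u, 0) i = φG (v, 1) i := by
      intro i
      rcases lt_or_eq_of_le (hle i) with h | h
      · exact absurd ⟨hle, i, h⟩ hnv
      · exact h
    have h2 := hGuu u
    refine nvG (v, 1) (u, 1) (fun hc => (by decide : ¬ (1 : Fin 2) = 0) hc.1) ⟨fun i => (heq i) ▸ h2.1 i, ?_⟩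
    obtain ⟨i, hi⟩ := h2.2
    exact ⟨i, (heq i) ▸ hi⟩
  -- basic facts about φH
  have hHuu : ∀ a : β, vecLT (φH (a, 0)) (φH (a, 1)) := fun a =>
    (hH (a, 0) (a, 1) (fun h => (by decide : ¬ (0 : Fin 2) = 1) (congrArg Prod.snd h))).mp
      ⟨Or.inr rfl, rfl, rfl⟩
  have hHadj : ∀ {a b : β}, H.Adj a b → vecLT (φH (a, 0)) (φH (b, 1)) := fun {a b} h =>
    (hH (a, 0) (b, 1) (fun he => (H.ne_of_adj h) (congrArg Prod.fst he))).mp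
      ⟨Or.inl h, rfl, rfl⟩
  have nvH : ∀ x y : β × Fin 2, ¬ (x.2 = 0 ∧ y.2 = 1) → ¬ vecLT (φH x) (φH y) := by
    intro x y hst hv
    by_cases hxy : x = y
    · subst hxy
      obtain ⟨_, i, hi⟩ := hv
      exact absurd hi (lt_irrefl _)
    · exact hst ((hH x y hxy).mpr hv).2
  have BH : ∀ a b : β, a ≠ b → ¬ H.Adj a b → ¬ ∀ j, φH (a, 0) j ≤ φH (b, 1) j := by
    intro a b hab hadj hle
    have hnv : ¬ vecLT (φH (a, 0)) (φH (b, 1)) := fun hv => by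
      rcases ((hH _ _ (fun he => hab (congrArg Prod.fst he))).mpr hv).1 with h | h
      · exact hadj h
      · exact hab h
    have heq : ∀ j, φH (a, 0) j = φH (b, 1) j := by
      intro j
      rcases lt_or_eq_of_le (hle j) with h | h
      · exact absurd ⟨hle, j, h⟩ hnv
      · exact h
    have h2 := hHuu a
    refine nvH (b, 1) (a, 1) (fun hc => (by decide : ¬ (1 : Fin 2) = 0) hc.1) ⟨fun j => (heq j) ▸ h2.1 j, ?_⟩
    obtain ⟨j, hj⟩ := h2.2
    exact ⟨j, (heq j) ▸ hj⟩
  -- coloring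
  have hcol : G.Colorable k :=
    Nat.sInf_mem (⟨Fintype.card α, G.colorable_of_fintype⟩ : {n | G.Colorable n}.Nonempty)
  set C : G.Coloring (Fin k) := hcol.some with hC
  -- dH is positive
  obtain ⟨j0, -⟩ := (hHuu b0).2
  -- bounds lo and hi
  set S : Finset ℝ := Finset.univ.image (fun p : (β × Fin 2) × Fin dH => φH p.1 p.2) with hSdef
  have hS : S.Nonempty :=
    ⟨φH (b0, 0) j0, Finset.mem_image_of_mem _ (Finset.mem_univ ((b0, 0), j0))⟩
  set lo := S.min' hS - 1 with hlodef
  set hi := S.max' hS + 1 with hhidef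
  have hlo : ∀ x j, lo < φH x j := by
    intro x j
    have := S.min'_le (φH x j) (Finset.mem_image_of_mem _ (Finset.mem_univ (x, j)))
    rw [hlodef]; linarith
  have hhi : ∀ x j, φH x j < hi := by
    intro x j
    have := S.le_max' (φH x j) (Finset.mem_image_of_mem _ (Finset.mem_univ (x, j)))
    rw [hhidef]; linarith
  have hlohi : lo < hi := lt_trans (hlo (b0, 0) j0) (hhi (b0, 0) j0)
  -- the construction
  set ψ : (α × β) × Fin 2 → (Fin dG ⊕ Fin k × Fin dH) → ℝ := fun p =>
    Sum.elim (fun i => φG (p.1.1, p.2) i)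
      (fun qj => if C p.1.1 = qj.1 then φH (p.1.2, p.2) qj.2
                 else if p.2 = 0 then lo else hi) with hψ
  have fin2 : ∀ x : Fin 2, x = 0 ∨ x = 1 := by decide
  have hmain : ∀ p q, p ≠ q →
      (etensorRel (lexProd G H) K2dir p q ↔ vecLT' (ψ p) (ψ q)) := by
    rintro ⟨⟨u, a⟩, s⟩ ⟨⟨v, b⟩, t⟩ hpq
    have hψ1 : ∀ (u : α) (a : β) (s : Fin 2) (i : Fin dG),
        ψ ((u, a), s) (Sum.inl i) = φG (u, s) i := fun _ _ _ _ => rfl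
    have hψ2 : ∀ (u : α) (a : β) (s : Fin 2) (q : Fin k) (j : Fin dH),
        ψ ((u, a), s) (Sum.inr (q, j)) =
          if C u = q then φH (a, s) j else if s = 0 then lo else hi := fun _ _ _ _ _ => rfl
    constructor
    · rintro ⟨hadj, hs, ht⟩
      subst hs; subst ht
      have huv : G.Adj u v ∨ u = v := by
        rcases hadj with (h | h) | h
        · exact Or.inl h
        · exact Or.inr h.1
        · exact Or.inr (congrArg Prod.fst h)
      have hGlt : vecLT (φG (u, 0)) (φG (v, 1)) := by
        rcases huv with h | h
        · exact hGadj h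
        · subst h; exact hGuu u
      refine ⟨?_, ?_⟩
      · rintro (i | ⟨q, j⟩)
        · rw [hψ1, hψ1]
          exact hGlt.1 i
        · rw [hψ2, hψ2, if_pos (rfl : (0 : Fin 2) = 0),
            if_neg (by decide : ¬ (1 : Fin 2) = 0)]
          by_cases h1 : C u = q
          · rw [if_pos h1]
            by_cases h2 : C v = q
            · rw [if_pos h2]
              have hab : H.Adj a b ∨ a = b := by
                rcases hadj with (h | h) | h
                · exact absurd (h1.trans h2.symm) (C.valid h)
                · exact Or.inl h.2
                · exact Or.inr (congrArg Prod.snd h)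
              have hHlt : vecLT (φH (a, 0)) (φH (b, 1)) := by
                rcases hab with h | h
                · exact hHadj h
                · subst h; exact hHuu a
              exact hHlt.1 j
            · rw [if_neg h2]
              exact (hhi _ _).le
          · rw [if_neg h1]
            by_cases h2 : C v = q
            · rw [if_pos h2]
              exact (hlo _ _).le
            · rw [if_neg h2]
              exact hlohi.le
      · obtain ⟨i, hi'⟩ := hGlt.2
        refine ⟨Sum.inl i, ?_⟩
        rw [hψ1, hψ1]
        exact hi'
    · rintro ⟨hle, hst⟩
      have hleG : ∀ i, φG (u, s) i ≤ φG (v, t) i := by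
        intro i
        have h := hle (Sum.inl i)
        rwa [hψ1, hψ1] at h
      have hst01 : s = 0 ∧ t = 1 := by
        by_contra hbad
        have excl1 : t = 0 → C v ≠ C u → False := by
          intro ht hCne
          have h := hle (Sum.inr (C u, j0))
          rw [hψ2, hψ2, if_pos (rfl : C u = C u), if_neg hCne, if_pos ht] at h
          exact absurd h (not_le.2 (hlo _ _))
        have excl2 : s = 1 → C u ≠ C v → False := by
          intro hs hCne
          have h := hle (Sum.inr (C v, j0))
          rw [hψ2, hψ2, if_pos (rfl : C v = C v), if_neg hCne, hs,
            if_neg (by decide : ¬ (1 : Fin 2) = 0)] at h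
          exact absurd h (not_le.2 (hhi _ _))
        obtain ⟨w, hw⟩ := hst
        rcases w with i | ⟨q, j⟩
        · rw [hψ1, hψ1] at hw
          exact nvG (u, s) (v, t) hbad ⟨hleG, i, hw⟩
        · rw [hψ2, hψ2] at hw
          by_cases h1 : C u = q <;> by_cases h2 : C v = q
          · have hlej : ∀ j', φH (a, s) j' ≤ φH (b, t) j' := by
              intro j'
              have h := hle (Sum.inr (q, j'))
              rwa [hψ2, hψ2, if_pos h1, if_pos h2] at h
            rw [if_pos h1, if_pos h2] at hw
            exact nvH (a, s) (b, t) hbad ⟨hlej, j, hw⟩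
          · rw [if_pos h1, if_neg h2] at hw
            rcases fin2 t with ht | ht
            · rw [if_pos ht] at hw
              exact absurd hw (not_lt.2 (hlo _ _).le)
            · have hs1 : s = 1 := by
                rcases fin2 s with h | h
                · exact absurd ⟨h, ht⟩ hbad
                · exact h
              exact excl2 hs1 (fun hCeq => h2 (hCeq ▸ h1))
          · rw [if_neg h1, if_pos h2] at hw
            rcases fin2 s with hs | hs
            · have ht0 : t = 0 := by
                rcases fin2 t with h | h
                · exact h
                · exact absurd ⟨hs, h⟩ hbad
              exact excl1 ht0 (fun hCeq => h1 (hCeq ▸ h2))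
            · rw [hs, if_neg (by decide : ¬ (1 : Fin 2) = 0)] at hw
              exact absurd hw (not_lt.2 (hhi _ _).le)
          · rw [if_neg h1, if_neg h2] at hw
            rcases fin2 s with hs | hs <;> rcases fin2 t with ht | ht
            · rw [hs, ht] at hw
              exact absurd hw (lt_irrefl _)
            · exact hbad ⟨hs, ht⟩
            · rw [hs, ht, if_neg (by decide : ¬ (1 : Fin 2) = 0)] at hw
              rw [if_pos (rfl : (0 : Fin 2) = 0)] at hw
              exact absurd hw (not_lt.2 hlohi.le)
            · rw [hs, ht] at hw
              exact absurd hw (lt_irrefl _)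
      obtain ⟨hs, ht⟩ := hst01
      subst hs; subst ht
      have huv : G.Adj u v ∨ u = v := by
        by_cases h : u = v
        · exact Or.inr h
        by_cases hadj : G.Adj u v
        · exact Or.inl hadj
        · exact absurd hleG (BG u v h hadj)
      refine ⟨?_, rfl, rfl⟩
      rcases huv with hadj | rfl
      · exact Or.inl (Or.inl hadj)
      · have hleH : ∀ j, φH (a, 0) j ≤ φH (b, 1) j := by
          intro j
          have h := hle (Sum.inr (C u, j))
          rwa [hψ2, hψ2, if_pos (rfl : C u = C u), if_pos (rfl : C u = C u)] at h
        by_cases hab : a = b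
        · exact Or.inr (by rw [hab])
        by_cases hH' : H.Adj a b
        · exact Or.inl (Or.inr ⟨rfl, hH'⟩)
        · exact absurd hleH (BH a b hab hH')
  have hmem : (dG + k * dH) ∈ {d | ∃ φ : (α × β) × Fin 2 → Fin d → ℝ,
      Realizes (etensorRel (lexProd G H) K2dir) φ} :=
    ⟨_, realizes_of_equiv
      ((Equiv.sumCongr (Equiv.refl (Fin dG)) finProdFinEquiv).trans finSumFinEquiv)
      (etensorRel (lexProd G H) K2dir) ψ hmain⟩
  exact Nat.sInf_le hmem
end

section
/- For any graph G and integer k ≥ 1, letting G^k be the k-fold disjunctive power, im(G^k × K_2) ≤ k · im(G × K_2), and consequently α(G)^k ≤ im(G^k ×_e K_2) ≤ k·im(G × K_2) + α(G)^k. -/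
open SimpleGraph

noncomputable def indepNum' {V : Type*} (G : SimpleGraph V) : ℕ :=
  sSup {n | ∃ s : Finset V, s.card = n ∧ ∀ u ∈ s, ∀ v ∈ s, ¬ G.Adj u v}

section Aux

variable {V : Type*}

lemma matching_inj {G : SimpleGraph V} {n : ℕ} {a b : Fin n → V}
    (h : IsIndMatching G a b) : Function.Injective a := by
  intro i j hij
  by_contra hne
  exact (h.2 i j hne).2.1 (by rw [hij]; exact h.1 j)

lemma imNum_bdd [Fintype V] (G : SimpleGraph V) :
    BddAbove {n | ∃ a b : Fin n → V, IsIndMatching G a b} := by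
  refine ⟨Fintype.card V, ?_⟩
  rintro m ⟨a', b', h'⟩
  simpa using Fintype.card_le_of_injective a' (matching_inj h')

lemma le_imNum [Fintype V] {G : SimpleGraph V} {n : ℕ} {a b : Fin n → V}
    (h : IsIndMatching G a b) : n ≤ imNum G :=
  le_csSup (imNum_bdd G) ⟨a, b, h⟩

lemma exists_matching [Fintype V] (G : SimpleGraph V) :
    ∃ a b : Fin (imNum G) → V, IsIndMatching G a b := by
  have h0 : (0 : ℕ) ∈ {n | ∃ a b : Fin n → V, IsIndMatching G a b} :=
    ⟨Fin.elim0, Fin.elim0, fun i => i.elim0, fun i => i.elim0⟩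
  exact Nat.sSup_mem ⟨0, h0⟩ (imNum_bdd G)

lemma le_indepNum [Fintype V] {G : SimpleGraph V} {s : Finset V}
    (h : ∀ u ∈ s, ∀ v ∈ s, ¬ G.Adj u v) : s.card ≤ indepNum' G := by
  apply le_csSup
  · refine ⟨Fintype.card V, ?_⟩
    rintro m ⟨t, rfl, ht⟩
    simpa using Finset.card_le_card (Finset.subset_univ t)
  · exact ⟨s, rfl, h⟩

lemma exists_indep [Fintype V] (G : SimpleGraph V) :
    ∃ s : Finset V, s.card = indepNum' G ∧ ∀ u ∈ s, ∀ v ∈ s, ¬ G.Adj u v := by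
  have := Nat.sSup_mem (s := {n | ∃ s : Finset V, s.card = n ∧ ∀ u ∈ s, ∀ v ∈ s, ¬ G.Adj u v})
    ⟨0, ∅, rfl, by simp⟩
    ⟨Fintype.card V, by rintro m ⟨t, rfl, ht⟩; simpa using Finset.card_le_card (Finset.subset_univ t)⟩
  obtain ⟨s, hs, h⟩ := this
  exact ⟨s, hs, h⟩

lemma subadd [Fintype V] (G : SimpleGraph V) (k : ℕ) {n : ℕ}
    {a b : Fin n → (Fin k → V) × Fin 2}
    (h : IsIndMatching (tensor (disjPow G k) (⊤ : SimpleGraph (Fin 2))) a b) :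
    n ≤ k * imNum (tensor G (⊤ : SimpleGraph (Fin 2))) := by
  classical
  have hc : ∀ i, ∃ c, G.Adj ((a i).1 c) ((b i).1 c) := fun i => (h.1 i).1
  choose f hf using hc
  have hn : n = ∑ c : Fin k, (Finset.univ.filter (fun i => f i = c)).card := by
    rw [← Finset.card_eq_sum_card_fiberwise (fun i (_ : i ∈ Finset.univ) => Finset.mem_univ (f i))]
    simp
  have hbound : ∀ c : Fin k,
      (Finset.univ.filter (fun i => f i = c)).card ≤ imNum (tensor G (⊤ : SimpleGraph (Fin 2))) := by
    intro c
    set t := Finset.univ.filter (fun i => f i = c) with ht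
    set g : Fin t.card → Fin n := fun j => (t.equivFin.symm j : Fin n) with hg
    have hginj : Function.Injective g := by
      intro i j hij
      have := Subtype.ext hij
      simpa using t.equivFin.symm.injective (Subtype.ext hij)
    have hgmem : ∀ j, f (g j) = c := by
      intro j
      exact (Finset.mem_filter.mp (t.equivFin.symm j).2).2
    have key : ∀ p q : (Fin k → V) × Fin 2,
        ¬ (tensor (disjPow G k) (⊤ : SimpleGraph (Fin 2))).Adj p q →
        ¬ (tensor G (⊤ : SimpleGraph (Fin 2))).Adj (p.1 c, p.2) (q.1 c, q.2) := by
      rintro p q hpq ⟨hG, hs⟩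
      exact hpq ⟨⟨c, hG⟩, hs⟩
    refine le_imNum (a := fun j => ((a (g j)).1 c, (a (g j)).2))
      (b := fun j => ((b (g j)).1 c, (b (g j)).2)) ⟨?_, ?_⟩
    · intro j
      refine ⟨?_, (h.1 (g j)).2⟩
      have := hf (g j)
      rwa [hgmem j] at this
    · intro i j hij
      have hgij : g i ≠ g j := fun e => hij (hginj e)
      obtain ⟨h1, h2, h3⟩ := h.2 (g i) (g j) hgij
      exact ⟨key _ _ h1, key _ _ h2, key _ _ h3⟩
  have hsum : ∑ c : Fin k, (Finset.univ.filter (fun i => f i = c)).card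
      ≤ k * imNum (tensor G (⊤ : SimpleGraph (Fin 2))) := by
    calc ∑ c : Fin k, (Finset.univ.filter (fun i => f i = c)).card
        ≤ ∑ _c : Fin k, imNum (tensor G (⊤ : SimpleGraph (Fin 2))) :=
          Finset.sum_le_sum (fun c _ => hbound c)
      _ = k * imNum (tensor G (⊤ : SimpleGraph (Fin 2))) := by simp [Finset.sum_const, mul_comm]
  exact le_trans (le_of_eq hn) hsum

lemma etensor_split {W : Type*} [Fintype W] (H : SimpleGraph W) {n : ℕ}
    {a b : Fin n → W × Fin 2}
    (h : IsIndMatching (etensor H (⊤ : SimpleGraph (Fin 2))) a b) :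
    n ≤ imNum (tensor H (⊤ : SimpleGraph (Fin 2))) + indepNum' H := by
  classical
  set t : Finset (Fin n) := Finset.univ.filter (fun i => H.Adj (a i).1 (b i).1) with ht
  set t' : Finset (Fin n) := Finset.univ.filter (fun i => ¬ H.Adj (a i).1 (b i).1) with ht'
  have hcard : t.card + t'.card = n := by
    rw [ht, ht']
    simpa using Finset.card_filter_add_card_filter_not
      (s := (Finset.univ : Finset (Fin n))) (p := fun i => H.Adj (a i).1 (b i).1)
  -- true part
  have htensor : t.card ≤ imNum (tensor H (⊤ : SimpleGraph (Fin 2))) := by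
    set g : Fin t.card → Fin n := fun j => (t.equivFin.symm j : Fin n) with hg
    have hginj : Function.Injective g := by
      intro i j hij
      simpa using t.equivFin.symm.injective (Subtype.ext hij)
    have hgadj : ∀ j, H.Adj (a (g j)).1 (b (g j)).1 := fun j =>
      (Finset.mem_filter.mp (t.equivFin.symm j).2).2
    have key : ∀ p q : W × Fin 2,
        ¬ (etensor H (⊤ : SimpleGraph (Fin 2))).Adj p q →
        ¬ (tensor H (⊤ : SimpleGraph (Fin 2))).Adj p q := by
      rintro p q hpq ⟨h1, h2⟩
      exact hpq ⟨Or.inl h1, h2⟩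
    refine le_imNum (a := fun j => a (g j)) (b := fun j => b (g j)) ⟨?_, ?_⟩
    · exact fun j => ⟨hgadj j, (h.1 (g j)).2⟩
    · intro i j hij
      have hgij : g i ≠ g j := fun e => hij (hginj e)
      obtain ⟨h1, h2, h3⟩ := h.2 (g i) (g j) hgij
      exact ⟨key _ _ h1, key _ _ h2, key _ _ h3⟩
  -- false part
  have hvert : ∀ i ∈ t', (b i).1 = (a i).1 := by
    intro i hi
    have hni : ¬ H.Adj (a i).1 (b i).1 := (Finset.mem_filter.mp hi).2
    rcases (h.1 i).1 with h1 | h1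
    · exact absurd h1 hni
    · exact h1.symm
  have hindep : t'.card ≤ indepNum' H := by
    have hinj : Set.InjOn (fun i => (a i).1) t' := by
      intro i hi j hj hij
      by_contra hne
      rcases eq_or_ne (a i).2 (a j).2 with he | hs
      · have h2 : (a i).2 ≠ (b j).2 := by rw [he]; exact ((h.1 j).2).ne
        exact (h.2 i j hne).2.1
          ⟨Or.inr (by rw [hvert j hj]; exact hij), by simpa using h2⟩
      · exact (h.2 i j hne).1 ⟨Or.inr hij, by simpa using hs⟩
    have hind : ∀ u ∈ t'.image (fun i => (a i).1), ∀ w ∈ t'.image (fun i => (a i).1),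
        ¬ H.Adj u w := by
      intro u hu w hw hadj
      obtain ⟨i, hi, rfl⟩ := Finset.mem_image.mp hu
      obtain ⟨j, hj, rfl⟩ := Finset.mem_image.mp hw
      by_cases hne : i = j
      · subst hne; exact H.loopless.irrefl _ hadj
      · rcases eq_or_ne (a i).2 (a j).2 with he | hs
        · have h2 : (a i).2 ≠ (b j).2 := by rw [he]; exact ((h.1 j).2).ne
          exact (h.2 i j hne).2.1
            ⟨Or.inl (by rw [hvert j hj]; exact hadj), by simpa using h2⟩
        · exact (h.2 i j hne).1 ⟨Or.inl hadj, by simpa using hs⟩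
    calc t'.card = (t'.image (fun i => (a i).1)).card :=
          (Finset.card_image_of_injOn hinj).symm
      _ ≤ indepNum' H := le_indepNum hind
  omega

lemma alpha_pow_le_im [Fintype V] (G : SimpleGraph V) (k : ℕ) :
    indepNum' G ^ k ≤ imNum (etensor (disjPow G k) (⊤ : SimpleGraph (Fin 2))) := by
  classical
  obtain ⟨s, hs, hsind⟩ := exists_indep G
  set T : Finset (Fin k → V) := Fintype.piFinset (fun _ => s) with hT
  have hTcard : T.card = indepNum' G ^ k := by
    rw [hT, Fintype.card_piFinset]
    simp [hs]
  have hTmem : ∀ x : T, ∀ c, (x : Fin k → V) c ∈ s := by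
    intro x c
    exact Fintype.mem_piFinset.mp x.2 c
  set e : Fin T.card → Fin k → V := fun j => (T.equivFin.symm j : Fin k → V) with he
  have heinj : Function.Injective e := by
    intro i j hij
    simpa using T.equivFin.symm.injective (Subtype.ext hij)
  have hnoadj : ∀ i j : Fin T.card, ¬ (disjPow G k).Adj (e i) (e j) := by
    rintro i j ⟨c, hc⟩
    exact hsind _ (hTmem _ c) _ (hTmem _ c) hc
  have hmatch : IsIndMatching (etensor (disjPow G k) (⊤ : SimpleGraph (Fin 2)))
      (fun j => (e j, 0)) (fun j => (e j, 1)) := by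
    constructor
    · intro j
      exact ⟨Or.inr rfl, by simp⟩
    · intro i j hij
      have hne : e i ≠ e j := fun h => hij (heinj h)
      refine ⟨fun hadj => hadj.2.ne rfl, ?_, fun hadj => hadj.2.ne rfl⟩
      rintro ⟨h1 | h1, -⟩
      · exact hnoadj i j h1
      · exact hne h1
  calc indepNum' G ^ k = T.card := hTcard.symm
    _ ≤ _ := le_imNum hmatch

lemma indep_pow_card_le [Fintype V] (G : SimpleGraph V) :
    ∀ (k : ℕ) (S : Finset (Fin k → V)),
      (∀ x ∈ S, ∀ y ∈ S, ¬ (disjPow G k).Adj x y) → S.card ≤ indepNum' G ^ k := by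
  intro k
  induction k with
  | zero =>
    intro S _
    have : S.card ≤ 1 := Finset.card_le_one.mpr
      (fun x _ y _ => funext fun i => i.elim0)
    simpa using this
  | succ k ih =>
    intro S hS
    classical
    set T : Finset V := S.image (fun x => x (Fin.last k)) with hT
    have hproj : ∀ x ∈ S, x (Fin.last k) ∈ T := fun x hx =>
      Finset.mem_image_of_mem _ hx
    have hTind : ∀ u ∈ T, ∀ w ∈ T, ¬ G.Adj u w := by
      intro u hu w hw hadj
      obtain ⟨x, hx, rfl⟩ := Finset.mem_image.mp hu
      obtain ⟨y, hy, rfl⟩ := Finset.mem_image.mp hw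
      exact hS x hx y hy ⟨Fin.last k, hadj⟩
    have hfiber : ∀ v ∈ T, (S.filter (fun x => x (Fin.last k) = v)).card ≤ indepNum' G ^ k := by
      intro v _
      set F := S.filter (fun x => x (Fin.last k) = v) with hF
      have hFinj : Set.InjOn (fun x : Fin (k+1) → V => fun i : Fin k => x i.castSucc) F := by
        intro x hx y hy hxy
        funext i
        refine Fin.lastCases ?_ ?_ i
        · rw [(Finset.mem_filter.mp hx).2, (Finset.mem_filter.mp hy).2]
        · intro i
          exact congrFun hxy i
      have hFind : ∀ x' ∈ F.image (fun x : Fin (k+1) → V => fun i : Fin k => x i.castSucc), ∀ y' ∈ F.image (fun x : Fin (k+1) → V => fun i : Fin k => x i.castSucc),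
          ¬ (disjPow G k).Adj x' y' := by
        intro x' hx' y' hy' hadj
        obtain ⟨x, hx, rfl⟩ := Finset.mem_image.mp hx'
        obtain ⟨y, hy, rfl⟩ := Finset.mem_image.mp hy'
        obtain ⟨i, hi⟩ := hadj
        exact hS x (Finset.mem_filter.mp hx).1 y (Finset.mem_filter.mp hy).1
          ⟨i.castSucc, hi⟩
      calc F.card = (F.image (fun x : Fin (k+1) → V => fun i : Fin k => x i.castSucc)).card := (Finset.card_image_of_injOn hFinj).symm
        _ ≤ indepNum' G ^ k := ih _ hFind
    calc S.card = ∑ v ∈ T, (S.filter (fun x => x (Fin.last k) = v)).card :=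
          Finset.card_eq_sum_card_fiberwise hproj
      _ ≤ ∑ _v ∈ T, indepNum' G ^ k := Finset.sum_le_sum hfiber
      _ = T.card * indepNum' G ^ k := by simp [Finset.sum_const]
      _ ≤ indepNum' G * indepNum' G ^ k :=
          Nat.mul_le_mul_right _ (le_indepNum hTind)
      _ = indepNum' G ^ (k + 1) := by ring

lemma indepNum_disjPow_le [Fintype V] (G : SimpleGraph V) (k : ℕ) :
    indepNum' (disjPow G k) ≤ indepNum' G ^ k := by
  classical
  apply csSup_le'
  rintro n ⟨S, rfl, hS⟩
  exact indep_pow_card_le G k S hS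

end Aux

theorem stmt16 {V : Type*} [Fintype V] (G : SimpleGraph V) (k : ℕ) (hk : 1 ≤ k) :
    imNum (tensor (disjPow G k) (⊤ : SimpleGraph (Fin 2))) ≤
      k * imNum (tensor G (⊤ : SimpleGraph (Fin 2))) ∧
    indepNum' G ^ k ≤ imNum (etensor (disjPow G k) (⊤ : SimpleGraph (Fin 2))) ∧
    imNum (etensor (disjPow G k) (⊤ : SimpleGraph (Fin 2))) ≤
      k * imNum (tensor G (⊤ : SimpleGraph (Fin 2))) + indepNum' G ^ k := by
  classical
  obtain ⟨a, b, hab⟩ := exists_matching (tensor (disjPow G k) (⊤ : SimpleGraph (Fin 2)))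
  have h1 : imNum (tensor (disjPow G k) (⊤ : SimpleGraph (Fin 2))) ≤
      k * imNum (tensor G (⊤ : SimpleGraph (Fin 2))) := subadd G k hab
  have h2 := alpha_pow_le_im G k
  obtain ⟨a', b', hab'⟩ := exists_matching (etensor (disjPow G k) (⊤ : SimpleGraph (Fin 2)))
  have h3 : imNum (etensor (disjPow G k) (⊤ : SimpleGraph (Fin 2))) ≤
      imNum (tensor (disjPow G k) (⊤ : SimpleGraph (Fin 2))) + indepNum' (disjPow G k) :=
    etensor_split (disjPow G k) hab'
  have h4 := indepNum_disjPow_le G k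
  exact ⟨h1, h2, le_trans h3 (add_le_add h1 h4)⟩
end
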